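/- In the hyperboloid model of H³, let L be a geodesic through x₀ = (1,0,0,0) with planes P, P⁺ = φ(t)P, P⁻ = φ(−t)P orthogonal to L (φ(r) the Minkowski boost in the (1,2)-plane). There exists t₀ such that for t > t₀, any geodesic M intersecting both P⁻ and P⁺ intersects P, and cosh(d(M ∩ P, x₀)) < 1 + 4e^{−2t}. Equivalently, cosh(d(M∩P, x₀)) ≤ 1/√(1 − 2/cosh²(t)). -/

import Mathlib

/-- Minkowski inner product on `ℝ^{1,3}`. -/
def mink (x y : Fin 4 → ℝ) : ℝ :=
  -(x 0 * y 0) + x 1 * y 1 + x 2 * y 2 + x 3 * y 3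

/-- The Minkowski boost `φ(r)` in the `(1,2)`-coordinate plane. -/
noncomputable def boost (r : ℝ) (x : Fin 4 → ℝ) : Fin 4 → ℝ :=
  ![Real.cosh r * x 0 + Real.sinh r * x 1,
    Real.sinh r * x 0 + Real.cosh r * x 1, x 2, x 3]

/-- The base point `x₀ = (1,0,0,0)` of the hyperboloid. -/
def basePt : Fin 4 → ℝ := ![1, 0, 0, 0]

private lemma aux_transverse (a₁ a₂ b₁ b₂ c₁ c₂ : ℝ) (h1p : 0 < a₁) (h2p : 0 < a₂)
    (h1 : b₁ ^ 2 + c₁ ^ 2 = a₁ ^ 2 - 1) (h2 : b₂ ^ 2 + c₂ ^ 2 = a₂ ^ 2 - 1) :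
    (a₂ * b₁ + a₁ * b₂) ^ 2 + (a₂ * c₁ + a₁ * c₂) ^ 2 < 4 * (a₁ * a₂) ^ 2 := by
  nlinarith [sq_nonneg (a₂ * b₁ - a₁ * b₂), sq_nonneg (a₂ * c₁ - a₁ * c₂),
    mul_pos h1p h1p, mul_pos h2p h2p]

private lemma aux_coth (E d e f : ℝ) (hA : d * E = e) (hB : d * e = f)
    (hC : 2 * f < e) : (E + e) / 2 < (1 + 4 * d) * ((E - e) / 2) := by
  nlinarith [hA, hB, hC]

set_option maxHeartbeats 1000000 in
/-- In the hyperboloid model of `ℍ³`, with planes `P` (through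
`x₀ = (1,0,0,0)`, second coordinate `= 0`), `P⁺ = φ(t)P`, `P⁻ = φ(−t)P` orthogonal to
the geodesic `L` through `x₀`: there is `t₀` such that for `t > t₀`, any geodesic `M`
meeting `P⁺` in `φ(t)p₁` and `P⁻` in `φ(−t)p₂` (with `p₁, p₂ ∈ P` on the hyperboloid)
meets `P` in the normalization `q` of `m = (2a₁)⁻¹ φ(t)p₁ + (2a₂)⁻¹ φ(−t)p₂`, which
indeed lies in `P` and is timelike, and
`cosh d(M ∩ P, x₀) = −⟨q, x₀⟩ ≤ 1/√(1 − 2/cosh² t) < 1 + 4 e^{−2t}`. -/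
theorem geodesic_meets_middle_plane_close_to_center :
    ∃ t₀ : ℝ, ∀ t : ℝ, t₀ < t → ∀ p₁ p₂ : Fin 4 → ℝ,
      mink p₁ p₁ = -1 → 0 < p₁ 0 → p₁ 1 = 0 →
      mink p₂ p₂ = -1 → 0 < p₂ 0 → p₂ 1 = 0 →
      ∀ m : Fin 4 → ℝ,
        m = (2 * p₁ 0)⁻¹ • boost t p₁ + (2 * p₂ 0)⁻¹ • boost (-t) p₂ →
        m 1 = 0 ∧ mink m m < 0 ∧
        -(mink ((Real.sqrt (-(mink m m)))⁻¹ • m) basePt)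
            ≤ 1 / Real.sqrt (1 - 2 / Real.cosh t ^ 2) ∧
        -(mink ((Real.sqrt (-(mink m m)))⁻¹ • m) basePt)
            < 1 + 4 * Real.exp (-2 * t) := by
  refine ⟨2, fun t ht p₁ p₂ h1 h1p h1z h2 h2p h2z m hm => ?_⟩
  have ha1 : p₁ 0 ≠ 0 := ne_of_gt h1p
  have ha2 : p₂ 0 ≠ 0 := ne_of_gt h2p
  rw [mink, h1z] at h1
  rw [mink, h2z] at h2
  have hb1 : p₁ 2 ^ 2 + p₁ 3 ^ 2 = p₁ 0 ^ 2 - 1 := by linear_combination h1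
  have hb2 : p₂ 2 ^ 2 + p₂ 3 ^ 2 = p₂ 0 ^ 2 - 1 := by linear_combination h2
  clear h1 h2
  set c := Real.cosh t with hcdef
  have hcc : 0 < c := Real.cosh_pos t
  -- exp bounds
  have hE2 : (7:ℝ) < Real.exp 2 := by
    have h := Real.exp_one_gt_d9
    have h2 : Real.exp 2 = Real.exp 1 * Real.exp 1 := by
      rw [← Real.exp_add]; norm_num
    nlinarith [h, h2]
  have hEt : (7:ℝ) < Real.exp t := lt_trans hE2 (Real.exp_lt_exp.mpr ht)
  have hcbig : (3:ℝ) < c := by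
    rw [hcdef, Real.cosh_eq]
    have := Real.exp_pos (-t)
    linarith
  -- components of m
  have hm0 : m 0 = c := by
    rw [hm]
    simp only [Pi.add_apply, Pi.smul_apply, smul_eq_mul, boost, Matrix.cons_val_zero,
      Real.cosh_neg, Real.sinh_neg, h1z, h2z]
    field_simp
    ring
  have hm1 : m 1 = 0 := by
    rw [hm]
    simp only [Pi.add_apply, Pi.smul_apply, smul_eq_mul, boost, Matrix.cons_val_one,
      Matrix.head_cons, Matrix.cons_val_zero, Real.cosh_neg, Real.sinh_neg, h1z, h2z]
    field_simp
    ring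
  have hm2 : m 2 = (2 * p₁ 0)⁻¹ * p₁ 2 + (2 * p₂ 0)⁻¹ * p₂ 2 := by
    rw [hm]
    simp [boost]
  have hm3 : m 3 = (2 * p₁ 0)⁻¹ * p₁ 3 + (2 * p₂ 0)⁻¹ * p₂ 3 := by
    rw [hm]
    simp [boost]
  clear hm
  -- the transverse part is small
  have key : (p₂ 0 * p₁ 2 + p₁ 0 * p₂ 2) ^ 2 + (p₂ 0 * p₁ 3 + p₁ 0 * p₂ 3) ^ 2
      < 4 * (p₁ 0 * p₂ 0) ^ 2 :=
    aux_transverse (p₁ 0) (p₂ 0) (p₁ 2) (p₂ 2) (p₁ 3) (p₂ 3) h1p h2p hb1 hb2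
  have hs : m 2 ^ 2 + m 3 ^ 2 < 1 := by
    rw [hm2, hm3,
      show (2 * p₁ 0)⁻¹ * p₁ 2 + (2 * p₂ 0)⁻¹ * p₂ 2
          = (p₂ 0 * p₁ 2 + p₁ 0 * p₂ 2) / (2 * (p₁ 0 * p₂ 0)) by field_simp,
      show (2 * p₁ 0)⁻¹ * p₁ 3 + (2 * p₂ 0)⁻¹ * p₂ 3
          = (p₂ 0 * p₁ 3 + p₁ 0 * p₂ 3) / (2 * (p₁ 0 * p₂ 0)) by field_simp,
      div_pow, div_pow, ← add_div, div_lt_one (by positivity)]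
    calc (p₂ 0 * p₁ 2 + p₁ 0 * p₂ 2) ^ 2 + (p₂ 0 * p₁ 3 + p₁ 0 * p₂ 3) ^ 2
        < 4 * (p₁ 0 * p₂ 0) ^ 2 := key
      _ = (2 * (p₁ 0 * p₂ 0)) ^ 2 := by ring
  have hs0 : 0 ≤ m 2 ^ 2 + m 3 ^ 2 := by positivity
  have hmm : mink m m = -(c ^ 2) + (m 2 ^ 2 + m 3 ^ 2) := by
    rw [mink, hm0, hm1]; ring
  have hc2 : (2:ℝ) < c ^ 2 := by
    have h9 : (3:ℝ) ^ 2 < c ^ 2 := by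
      apply pow_lt_pow_left₀ hcbig (by norm_num) (by norm_num)
    linarith
  have hneg : mink m m < 0 := by rw [hmm]; linarith [hs, hc2]
  have hM : -(mink m m) = c ^ 2 - (m 2 ^ 2 + m 3 ^ 2) := by rw [hmm]; ring
  -- the normalized point's first coordinate
  have hq : -(mink ((Real.sqrt (-(mink m m)))⁻¹ • m) basePt)
      = c / Real.sqrt (-(mink m m)) := by
    have hb0 : basePt 0 = 1 := rfl
    have hbb1 : basePt 1 = 0 := rfl
    have hbb2 : basePt 2 = 0 := rfl
    have hbb3 : basePt 3 = 0 := rfl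
    simp only [mink, Pi.smul_apply, smul_eq_mul, hb0, hbb1, hbb2, hbb3, hm0]
    rw [mul_zero, mul_zero, mul_zero, mul_one, add_zero, add_zero, add_zero, neg_neg,
      inv_mul_eq_div]
  set S := Real.sqrt (-(mink m m)) with hSdef
  have hSub : Real.sqrt (c ^ 2 - 2) ≤ S := by
    rw [hSdef, hM]
    exact Real.sqrt_le_sqrt (by linarith [hs])
  have hsq2pos : 0 < Real.sqrt (c ^ 2 - 2) := Real.sqrt_pos.mpr (by linarith)
  have hSpos : 0 < S := lt_of_lt_of_le hsq2pos hSub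
  have hrhs : 1 / Real.sqrt (1 - 2 / c ^ 2) = c / Real.sqrt (c ^ 2 - 2) := by
    rw [show 1 - 2 / c ^ 2 = (c ^ 2 - 2) / c ^ 2 by field_simp,
      Real.sqrt_div (by linarith : (0:ℝ) ≤ c ^ 2 - 2), Real.sqrt_sq hcc.le, one_div_div]
  refine ⟨hm1, hneg, ?_, ?_⟩
  · rw [hq, hrhs]
    exact div_le_div_of_nonneg_left hcc.le hsq2pos hSub
  · rw [hq]
    have hsinhpos : 0 < Real.sinh t := Real.sinh_pos_iff.mpr (by linarith)
    have hsinhlt : Real.sinh t < S := by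
      rw [hSdef, hM]
      rw [show Real.sinh t = Real.sqrt (Real.sinh t ^ 2) from (Real.sqrt_sq hsinhpos.le).symm]
      apply Real.sqrt_lt_sqrt (by positivity)
      have h := Real.cosh_sq t
      rw [← hcdef] at h
      linarith [hs]
    have hA : Real.exp (-2 * t) * Real.exp t = Real.exp (-t) := by
      rw [← Real.exp_add]; ring_nf
    have hB : Real.exp (-2 * t) * Real.exp (-t) = Real.exp (-3 * t) := by
      rw [← Real.exp_add]; ring_nf
    have hC : 2 * Real.exp (-3 * t) < Real.exp (-t) := by
      have hD : Real.exp (-3 * t) * Real.exp (2 * t) = Real.exp (-t) := by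
        rw [← Real.exp_add]; ring_nf
      have hE : (2:ℝ) < Real.exp (2 * t) := by
        have := Real.add_one_lt_exp (x := 2 * t) (by linarith)
        linarith
      have hF := mul_lt_mul_of_pos_left hE (Real.exp_pos (-3 * t))
      linarith [hD, hF]
    have key2 : c < (1 + 4 * Real.exp (-2 * t)) * Real.sinh t := by
      rw [hcdef, Real.cosh_eq, Real.sinh_eq]
      exact aux_coth (Real.exp t) (Real.exp (-2 * t)) (Real.exp (-t)) (Real.exp (-3 * t))
        hA hB hC
    calc c / S < c / Real.sinh t :=
          div_lt_div_of_pos_left hcc hsinhpos hsinhlt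
      _ < 1 + 4 * Real.exp (-2 * t) := (div_lt_iff₀ hsinhpos).mpr (by linarith [key2])
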